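/- Let n be a positive integer and let Λ, B ⊆ ℝⁿ be such that the family of half-planes {π_(λ,β)}_{(λ,β) ∈ Λ×B} foliates Δ⁺, i.e.: (existence) for every (u,v) ∈ Δ⁺ there exist λ ∈ Λ, β ∈ B, and real numbers s < t with u = s·λ + β and v = t·λ + β; (uniqueness) this pair (λ,β) is unique for each (u,v) ∈ Δ⁺; and (containment) for every (λ,β) ∈ Λ×B, π_(λ,β) ⊆ Δ⁺. Then every λ ∈ Λ is nonzero, and the normalization map λ ↦ λ/‖λ‖, where ‖λ‖ = √(λ_1² + ⋯ + λ_n²) is the Euclidean norm, is a bijection from Λ onto the set Λ* = {w ∈ ℝⁿ : w_i > 0 for every i and ‖w‖ = 1}. -/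

import Mathlib

/-- If the family of half-planes `{π_(λ,β)}_{(λ,β) ∈ Λ×B}` foliates `Δ⁺`
(existence, uniqueness, and containment), then every `λ ∈ Λ` is nonzero and the
normalization map `λ ↦ λ/‖λ‖` (Euclidean norm) is a bijection from `Λ` onto
`Λ* = {w : w_i > 0 for every i and ‖w‖ = 1}`. -/
theorem normalization_bijection (n : ℕ) (hn : 0 < n)
    (Lam B : Set (Fin n → ℝ))
    (hex : ∀ u v : Fin n → ℝ, (∀ i, u i < v i) →
      ∃ lam ∈ Lam, ∃ beta ∈ B, ∃ s t : ℝ, s < t ∧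
        u = (fun i => s * lam i + beta i) ∧ v = (fun i => t * lam i + beta i))
    (huniq : ∀ u v : Fin n → ℝ, (∀ i, u i < v i) →
      ∀ lam ∈ Lam, ∀ beta ∈ B, ∀ lam' ∈ Lam, ∀ beta' ∈ B,
      ∀ s t s' t' : ℝ, s < t → s' < t' →
        u = (fun i => s * lam i + beta i) → v = (fun i => t * lam i + beta i) →
        u = (fun i => s' * lam' i + beta' i) → v = (fun i => t' * lam' i + beta' i) →
        lam = lam' ∧ beta = beta')
    (hcontain : ∀ lam ∈ Lam, ∀ beta ∈ B, ∀ s t : ℝ, s < t →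
      ∀ i, s * lam i + beta i < t * lam i + beta i) :
    (∀ lam ∈ Lam, lam ≠ 0) ∧
    Set.BijOn (fun lam : Fin n → ℝ => fun i => lam i / Real.sqrt (∑ j, (lam j) ^ 2))
      Lam {w : Fin n → ℝ | (∀ i, 0 < w i) ∧ Real.sqrt (∑ i, (w i) ^ 2) = 1} := by
  have hne : Nonempty (Fin n) := ⟨⟨0, hn⟩⟩
  -- B is nonempty
  obtain ⟨lam0, _, beta0, hbeta0, -⟩ :=
    hex 0 (fun _ => 1) (fun i => by norm_num)
  -- every λ in Λ has all components positive
  have hpos : ∀ lam ∈ Lam, ∀ i, 0 < lam i := by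
    intro lam hlam i
    have := hcontain lam hlam beta0 hbeta0 0 1 one_pos i
    linarith
  -- norm facts
  set N : (Fin n → ℝ) → ℝ := fun lam => Real.sqrt (∑ j, (lam j) ^ 2) with hN
  have hNpos : ∀ lam ∈ Lam, 0 < N lam := by
    intro lam hlam
    apply Real.sqrt_pos.2
    exact Finset.sum_pos (fun j _ => pow_pos (hpos lam hlam j) 2) Finset.univ_nonempty
  have hmap : ∀ lam ∈ Lam,
      (∀ i, 0 < lam i / N lam) ∧ Real.sqrt (∑ i, (lam i / N lam) ^ 2) = 1 := by
    intro lam hlam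
    have hNp := hNpos lam hlam
    constructor
    · intro i; exact div_pos (hpos lam hlam i) hNp
    · have hsum : ∑ i, (lam i / N lam) ^ 2 = (∑ i, (lam i) ^ 2) / (N lam) ^ 2 := by
        rw [Finset.sum_div]
        exact Finset.sum_congr rfl fun i _ => by ring
      have hsq : (N lam) ^ 2 = ∑ j, (lam j) ^ 2 := by
        rw [hN]
        exact Real.sq_sqrt (Finset.sum_nonneg fun j _ => sq_nonneg _)
      rw [hsum, hsq, div_self (ne_of_gt (by rw [← hsq]; positivity)), Real.sqrt_one]
  constructor
  · intro lam hlam h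
    have := hpos lam hlam ⟨0, hn⟩
    rw [h] at this
    simp at this
  refine ⟨fun lam hlam => hmap lam hlam, ?_, ?_⟩
  · -- injectivity
    intro lam hlam lam' hlam' heq
    have hNp := hNpos lam hlam
    have hNp' := hNpos lam' hlam'
    have hc : ∀ i, lam' i = (N lam' / N lam) * lam i := by
      intro i
      have := congrFun heq i
      simp only at this
      field_simp at this ⊢
      have h2 : lam i * N lam' = lam' i * N lam :=
        (div_eq_div_iff (ne_of_gt hNp) (ne_of_gt hNp')).1 this
      linarith [h2]
    set c : ℝ := N lam' / N lam with hcd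
    have hcpos : 0 < c := div_pos hNp' hNp
    have huv : ∀ i, (0 : ℝ) * lam i + beta0 i < 1 * lam i + beta0 i :=
      hcontain lam hlam beta0 hbeta0 0 1 one_pos
    have key := huniq (fun i => 0 * lam i + beta0 i) (fun i => 1 * lam i + beta0 i)
      huv lam hlam beta0 hbeta0 lam' hlam' beta0 hbeta0 0 1 0 (1 / c)
      one_pos (one_div_pos.2 hcpos) rfl rfl
      (by funext i; rw [hc i]; ring)
      (by funext i; rw [hc i]; field_simp)
    exact key.1
  · -- surjectivity
    rintro w ⟨hwpos, hwnorm⟩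
    obtain ⟨lam, hlam, beta, hbeta, s, t, hst, hu, hv⟩ :=
      hex 0 w (fun i => hwpos i)
    have hwi : ∀ i, w i = (t - s) * lam i := by
      intro i
      have h1 := congrFun hu i
      have h2 := congrFun hv i
      simp only [Pi.zero_apply] at h1 h2
      linarith [h1, h2]
    have hts : 0 < t - s := by linarith
    refine ⟨lam, hlam, ?_⟩
    have hNlam : N lam = 1 / (t - s) := by
      have : ∑ j, (lam j) ^ 2 = (1 / (t - s)) ^ 2 * ∑ j, (w j) ^ 2 := by
        rw [Finset.mul_sum]
        refine Finset.sum_congr rfl fun j _ => ?_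
        rw [hwi j]; field_simp
      rw [hN]; simp only
      rw [this, Real.sqrt_mul (by positivity), Real.sqrt_sq (by positivity), hwnorm,
        mul_one]
    funext i
    show lam i / N lam = w i
    rw [hNlam, hwi i]
    field_simp
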